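/- For every α > 1 there exist real parameters t₁, t₂, t₃ with −t₁ < t₂ < −t₃ and t₁ − t₃ ≥ α, and with μ₁ = μ₃ = 1, such that for every f₂ ∈ (0,1) the linear program of the previous statement has optimal value at most 1/α. -/

import Mathlib

/-- For every `α > 1` there are parameters `t₁, t₂, t₃` with `-t₁ < t₂ < -t₃` and
`t₁ - t₃ ≥ α` such that, with `μ₁ = μ₃ = 1`, for every `μ₂ > 0` and every
`f₂ ∈ (0,1)` the pseudo-split LP has optimal value at most `1/α`. -/
theorem stmt_16 (α : ℝ) (hα : 1 < α) :
    ∃ t₁ t₂ t₃ : ℝ, -t₁ < t₂ ∧ t₂ < -t₃ ∧ α ≤ t₁ - t₃ ∧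
      ∀ μ₂ : ℝ, 0 < μ₂ → ∀ f₂ : ℝ, 0 < f₂ → f₂ < 1 →
        sInf {v : ℝ | ∃ s₁ s₂ s₃ : ℝ, 0 ≤ s₁ ∧ 0 ≤ s₂ ∧ 0 ≤ s₃ ∧
            1 ≤ (μ₂ * (t₁ + t₂) / (1 - f₂)) * s₂ + (1 * (t₁ - t₃) / f₂) * s₃ ∧
            1 ≤ (1 * (t₁ + t₂) / (1 - f₂)) * s₁ + (1 * (-t₃ - t₂) / f₂) * s₃ ∧
            1 ≤ (1 * (t₁ - t₃) / (1 - f₂)) * s₁ + (μ₂ * (-t₃ - t₂) / f₂) * s₂ ∧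
            v = s₁ + s₂ + s₃} ≤ 1 / α := by
  have hα0 : (0:ℝ) < α := lt_trans one_pos hα
  refine ⟨α, -α/2, 0, by linarith, by linarith, by linarith, ?_⟩
  intro μ₂ hμ₂ f₂ hf₂ hf₂'
  have h1f : (0:ℝ) < 1 - f₂ := by linarith
  apply csInf_le
  · refine ⟨0, ?_⟩
    rintro v ⟨s₁, s₂, s₃, h1, h2, h3, _, _, _, rfl⟩
    positivity
  · refine ⟨(1 - f₂)/α, 0, f₂/α, by positivity, le_refl 0, by positivity, ?_, ?_, ?_, ?_⟩
    · have : 1 * (α - 0) / f₂ * (f₂ / α) = 1 := by field_simp; ring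
      rw [this]; simp
    · have h2a : 1 * (α + -α/2) / (1 - f₂) * ((1 - f₂)/α) = 1/2 := by field_simp; ring
      have h2b : 1 * (-0 - -α/2) / f₂ * (f₂/α) = 1/2 := by field_simp; ring
      rw [h2a, h2b]; norm_num
    · have : 1 * (α - 0) / (1 - f₂) * ((1 - f₂)/α) = 1 := by field_simp; ring
      rw [this]; simp
    · field_simp; ring
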